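/- Let p be a prime and let R be a ring with exactly p² elements such that p•x = 0 for every x ∈ R. Then the following are equivalent: (i) R is the union of some finite family of proper left ideals; (ii) every additive subgroup of R of order p is a left ideal of R. Moreover, if these hold, then R is the union of p + 1 proper left ideals, and R is not the union of any p proper left ideals. -/
import Mathlib

/-- A left ideal of a (possibly non-unital, non-commutative) ring `R`:
an additive subgroup closed under left multiplication by arbitrary ring elements. -/
def IsLeftIdeal {R : Type*} [NonUnitalRing R] (I : AddSubgroup R) : Prop :=
  ∀ (r : R) ⦃x : R⦄, x ∈ I → r * x ∈ I

/-- A right ideal of a (possibly non-unital, non-commutative) ring `R`: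
an additive subgroup closed under right multiplication by arbitrary ring elements. -/
def IsRightIdeal {R : Type*} [NonUnitalRing R] (I : AddSubgroup R) : Prop :=
  ∀ (r : R) ⦃x : R⦄, x ∈ I → x * r ∈ I

/-- A two-sided ideal: both a left and a right ideal. -/
def IsTwoSidedIdeal {R : Type*} [NonUnitalRing R] (I : AddSubgroup R) : Prop :=
  IsLeftIdeal I ∧ IsRightIdeal I

section Aux

variable {p : ℕ} {R : Type*} [AddGroup R]

lemma aux_card_zmul (hp : p.Prime) (hchar : ∀ x : R, p • x = 0)
    {x : R} (hx : x ≠ 0) : Nat.card (AddSubgroup.zmultiples x) = p := by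
  rw [Nat.card_zmultiples]
  rcases (Nat.dvd_prime hp).mp (addOrderOf_dvd_of_nsmul_eq_zero (hchar x)) with h | h
  · exact absurd (AddMonoid.addOrderOf_eq_one_iff.mp h) hx
  · exact h

lemma aux_line_eq [Finite R] (hp : p.Prime) (hchar : ∀ x : R, p • x = 0)
    {I : AddSubgroup R} (hI : Nat.card I = p) {x : R} (hx : x ∈ I) (hx0 : x ≠ 0) :
    I = AddSubgroup.zmultiples x :=
  (AddSubgroup.eq_of_le_of_card_ge (AddSubgroup.zmultiples_le_of_mem hx)
     (by rw [aux_card_zmul hp hchar hx0, hI])).symm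

lemma aux_proper_card [Finite R] (hp : p.Prime) (hcard : Nat.card R = p ^ 2)
    {I : AddSubgroup R} (hI : I ≠ ⊤) : Nat.card I ≤ p := by
  have hdvd : Nat.card I ∣ p ^ 2 := hcard ▸ AddSubgroup.card_addSubgroup_dvd_card I
  obtain ⟨m, hm, hm'⟩ := (Nat.dvd_prime_pow hp).mp hdvd
  have hm2 : m ≠ 2 := by
    rintro rfl
    exact hI (AddSubgroup.eq_top_of_card_eq I (by rw [hm', hcard]))
  calc Nat.card I = p ^ m := hm'
    _ ≤ p ^ 1 := Nat.pow_le_pow_right hp.pos (by omega)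
    _ = p := pow_one p

end Aux

/-- For a ring `R` of order `p²` (with `p • x = 0` for all `x`), being a union of
finitely many proper left ideals is equivalent to every additive subgroup of
order `p` being a left ideal; and in that case `R` is the union of `p + 1`
proper left ideals but not of any `p` proper left ideals. -/
theorem left_ideal_cover_of_order_p_sq (p : ℕ) (hp : p.Prime)
    (R : Type*) [NonUnitalRing R] (hcard : Nat.card R = p ^ 2)
    (hchar : ∀ x : R, p • x = 0) :
    ((∃ (n : ℕ) (f : Fin n → AddSubgroup R),
        (∀ i, IsLeftIdeal (f i) ∧ f i ≠ ⊤) ∧ ∀ x : R, ∃ i, x ∈ f i) ↔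
      (∀ I : AddSubgroup R, Nat.card I = p → IsLeftIdeal I)) ∧
    ((∀ I : AddSubgroup R, Nat.card I = p → IsLeftIdeal I) →
      (∃ f : Fin (p + 1) → AddSubgroup R,
        (∀ i, IsLeftIdeal (f i) ∧ f i ≠ ⊤) ∧ ∀ x : R, ∃ i, x ∈ f i) ∧
      ¬ ∃ f : Fin p → AddSubgroup R,
        (∀ i, IsLeftIdeal (f i) ∧ f i ≠ ⊤) ∧ ∀ x : R, ∃ i, x ∈ f i) := by
  classical
  have hp1 : 1 < p := hp.one_lt
  have hfin : Finite R := Nat.finite_of_card_ne_zero (by simp [hcard, hp.ne_zero])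
  haveI : Fintype R := Fintype.ofFinite R
  have hplt : p < p ^ 2 := by nlinarith
  -- a subgroup of order p is proper
  have hItop : ∀ I : AddSubgroup R, Nat.card I = p → I ≠ ⊤ := by
    intro I hI htop
    rw [htop] at hI
    rw [show Nat.card (⊤ : AddSubgroup R) = Nat.card R from
      Nat.card_congr AddSubgroup.topEquiv.toEquiv, hcard] at hI
    omega
  -- the cardinality of a subgroup as a finset of nonzero elements
  have hgcard : ∀ I : AddSubgroup R, ((I : Set R).toFinset.erase 0).card = Nat.card I - 1 := by
    intro I
    rw [Finset.card_erase_of_mem (Set.mem_toFinset.mpr (zero_mem I)), Set.toFinset_card]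
    congr 1
    rw [Nat.card_eq_fintype_card]
    rfl
  -- no p proper left ideals cover R
  have nocover : ¬ ∃ f : Fin p → AddSubgroup R,
      (∀ i, IsLeftIdeal (f i) ∧ f i ≠ ⊤) ∧ ∀ x : R, ∃ i, x ∈ f i := by
    rintro ⟨f, hf, hcov⟩
    have hsub : (Finset.univ : Finset R) ⊆
        insert 0 (Finset.univ.biUnion fun i : Fin p => ((f i : Set R).toFinset.erase 0)) := by
      intro x _
      by_cases hx : x = 0
      · simp [hx]
      · obtain ⟨i, hi⟩ := hcov x
        exact Finset.mem_insert_of_mem (Finset.mem_biUnion.mpr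
          ⟨i, Finset.mem_univ i, Finset.mem_erase.mpr ⟨hx, by simpa using hi⟩⟩)
    have hcle : ∀ i : Fin p, ((f i : Set R).toFinset.erase 0).card ≤ p - 1 := by
      intro i
      rw [hgcard (f i)]
      exact Nat.sub_le_sub_right (aux_proper_card hp hcard (hf i).2) 1
    have hbig : p ^ 2 ≤ 1 + p * (p - 1) := by
      calc p ^ 2 = (Finset.univ : Finset R).card := by
            rw [Finset.card_univ, ← Nat.card_eq_fintype_card, hcard]
        _ ≤ _ := Finset.card_le_card hsub
        _ ≤ 1 + (Finset.univ.biUnion fun i : Fin p => ((f i : Set R).toFinset.erase 0)).card :=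
            by simp [Nat.add_comm]
        _ ≤ 1 + ∑ i : Fin p, ((f i : Set R).toFinset.erase 0).card :=
            Nat.add_le_add_left (Finset.card_biUnion_le) 1
        _ ≤ 1 + ∑ _i : Fin p, (p - 1) :=
            Nat.add_le_add_left (Finset.sum_le_sum fun i _ => hcle i) 1
        _ = 1 + p * (p - 1) := by
            rw [Finset.sum_const, Finset.card_univ, Fintype.card_fin, smul_eq_mul]
    obtain ⟨q, rfl⟩ : ∃ q, p = q + 2 := ⟨p - 2, by omega⟩
    have e1 : (q + 2) ^ 2 = 1 + (q + 2) * (q + 2 - 1) + (q + 1) := by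
      rw [show q + 2 - 1 = q + 1 by omega]
      ring
    omega
  -- the set of order-p subgroups
  set T : Finset (AddSubgroup R) :=
    Finset.univ.filter (fun I => Nat.card I = p) with hT
  have hmemT : ∀ I : AddSubgroup R, I ∈ T ↔ Nat.card I = p := by
    intro I; simp [hT]
  have hdisj : ∀ I ∈ T, ∀ J ∈ T, I ≠ J →
      Disjoint ((I : Set R).toFinset.erase 0) ((J : Set R).toFinset.erase 0) := by
    intro I hI J hJ hne
    rw [Finset.disjoint_left]
    intro x hxI hxJ
    rw [Finset.mem_erase, Set.mem_toFinset] at hxI hxJ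
    exact hne ((aux_line_eq hp hchar ((hmemT I).mp hI) hxI.2 hxI.1).trans
      (aux_line_eq hp hchar ((hmemT J).mp hJ) hxJ.2 hxJ.1).symm)
  have hcover : (Finset.univ : Finset R).erase 0 =
      T.biUnion (fun I => (I : Set R).toFinset.erase 0) := by
    ext x
    simp only [Finset.mem_erase, Finset.mem_univ, and_true, Finset.mem_biUnion,
      Set.mem_toFinset]
    constructor
    · intro hx
      exact ⟨AddSubgroup.zmultiples x, (hmemT _).mpr (aux_card_zmul hp hchar hx),
        hx, AddSubgroup.mem_zmultiples x⟩
    · rintro ⟨I, _, hx, _⟩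
      exact hx
  have hTcard : T.card = p + 1 := by
    have hc1 : ((Finset.univ : Finset R).erase 0).card = p ^ 2 - 1 := by
      rw [Finset.card_erase_of_mem (Finset.mem_univ _), Finset.card_univ,
        ← Nat.card_eq_fintype_card, hcard]
    have hc2 : (T.biUnion (fun I => (I : Set R).toFinset.erase 0)).card =
        T.card * (p - 1) := by
      rw [Finset.card_biUnion hdisj]
      rw [Finset.sum_congr rfl (fun I hI => by
        rw [hgcard I, (hmemT I).mp hI])]
      simp [mul_comm]
    have heq : T.card * (p - 1) = p ^ 2 - 1 := by rw [← hc2, ← hcover, hc1]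
    obtain ⟨q, rfl⟩ : ∃ q, p = q + 2 := ⟨p - 2, by omega⟩
    have e1 : (q + 2) ^ 2 - 1 = (q + 3) * (q + 2 - 1) := by
      have : (q + 2) ^ 2 = (q + 3) * (q + 1) + 1 := by ring
      simp [this]
    rw [e1] at heq
    have := Nat.eq_of_mul_eq_mul_right (show 0 < q + 2 - 1 by omega) heq
    omega
  -- the construction of the covering family
  have construct : (∀ I : AddSubgroup R, Nat.card I = p → IsLeftIdeal I) →
      ∃ f : Fin (p + 1) → AddSubgroup R,
        (∀ i, IsLeftIdeal (f i) ∧ f i ≠ ⊤) ∧ ∀ x : R, ∃ i, x ∈ f i := by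
    intro h
    have e := T.equivFinOfCardEq hTcard
    refine ⟨fun i => (e.symm i : AddSubgroup R), fun i => ?_, fun x => ?_⟩
    · have hmem := (hmemT _).mp (e.symm i).2
      exact ⟨h _ hmem, hItop _ hmem⟩
    · by_cases hx : x = 0
      · exact ⟨0, hx ▸ zero_mem _⟩
      · refine ⟨e ⟨AddSubgroup.zmultiples x, (hmemT _).mpr (aux_card_zmul hp hchar hx)⟩, ?_⟩
        simp only [Equiv.symm_apply_apply]
        exact AddSubgroup.mem_zmultiples x
  refine ⟨⟨?_, fun h => ?_⟩, fun h => ⟨construct h, nocover⟩⟩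
  · rintro ⟨n, f, hf, hcov⟩ I hI
    have hIbot : I ≠ ⊥ := by
      rintro rfl
      rw [AddSubgroup.card_bot] at hI
      omega
    obtain ⟨⟨x, hxI⟩, hx0⟩ := AddSubgroup.ne_bot_iff_exists_ne_zero.mp hIbot
    have hx : x ≠ 0 := fun h => hx0 (Subtype.ext h)
    obtain ⟨i, hxi⟩ := hcov x
    have h1 : p ≤ Nat.card (f i) := by
      rw [← aux_card_zmul hp hchar hx]
      exact AddSubgroup.card_le_of_le (AddSubgroup.zmultiples_le_of_mem hxi)
    have h2 : Nat.card (f i) = p := le_antisymm (aux_proper_card hp hcard (hf i).2) h1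
    rw [aux_line_eq hp hchar hI hxI hx, ← aux_line_eq hp hchar h2 hxi hx]
    exact (hf i).1
  · obtain ⟨f, hf, hcov⟩ := construct h
    exact ⟨p + 1, f, hf, hcov⟩
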